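/- arXiv:1510.01073 — 3 statements merged into one kernel-verified Lean document; each statement's English description precedes it below -/
import Mathlib

section
/- The two-sided Jacobi–Davidson right correction equation (I - q p^H)(A - θ I)(I - q p^H) s = -r_q, subject to the constraint p^H s = 0, has exactly one solution s if and only if p^H (A - θ I)^{-1} q ≠ 0; and it has no solution if and only if p^H (A - θ I)^{-1} q = 0. -/
open Matrix

private lemma oneone' (M : Matrix (Fin 1) (Fin 1) ℂ) :
    M = M 0 0 • (1 : Matrix (Fin 1) (Fin 1) ℂ) := by
  ext i j
  fin_cases i; fin_cases j
  simp

/-- The two-sided Jacobi–Davidson right correction equation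
`(I - q pᴴ)(A - θ I)(I - q pᴴ) s = -r_q`, subject to `pᴴ s = 0`,
has exactly one solution iff `pᴴ (A - θ I)⁻¹ q ≠ 0`, and has no solution iff
`pᴴ (A - θ I)⁻¹ q = 0`. -/
theorem two_sided_jd_right_correction
    {n : ℕ} (A : Matrix (Fin n) (Fin n) ℂ)
    (p q : Matrix (Fin n) (Fin 1) ℂ)
    (hpq : pᴴ * q = 1)
    (θ : ℂ) (hθ : θ = (pᴴ * A * q) 0 0)
    (hA : IsUnit (A - θ • (1 : Matrix (Fin n) (Fin n) ℂ)))
    (rq : Matrix (Fin n) (Fin 1) ℂ)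
    (hrq : rq = (A - θ • 1) * q) :
    ((∃! s : Matrix (Fin n) (Fin 1) ℂ,
        pᴴ * s = 0 ∧
          (1 - q * pᴴ) * (A - θ • 1) * (1 - q * pᴴ) * s = -rq) ↔
      (pᴴ * (A - θ • (1 : Matrix (Fin n) (Fin n) ℂ))⁻¹ * q) 0 0 ≠ 0) ∧
    ((¬ ∃ s : Matrix (Fin n) (Fin 1) ℂ,
        pᴴ * s = 0 ∧
          (1 - q * pᴴ) * (A - θ • 1) * (1 - q * pᴴ) * s = -rq) ↔
      (pᴴ * (A - θ • (1 : Matrix (Fin n) (Fin n) ℂ))⁻¹ * q) 0 0 = 0) := by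
  set B := A - θ • (1 : Matrix (Fin n) (Fin n) ℂ) with hBdef
  have hdet : IsUnit B.det := (Matrix.isUnit_iff_isUnit_det B).mp hA
  have hB1 : B * B⁻¹ = 1 := Matrix.mul_nonsing_inv B hdet
  have hB2 : B⁻¹ * B = 1 := Matrix.nonsing_inv_mul B hdet
  set β : ℂ := (pᴴ * B⁻¹ * q) 0 0 with hβ
  have hpBinvq : pᴴ * B⁻¹ * q = β • 1 := oneone' _
  have hpAq : pᴴ * A * q = θ • 1 := by rw [hθ]; exact oneone' _
  have hpBq : pᴴ * B * q = 0 := by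
    simp only [hBdef, Matrix.mul_sub, Matrix.sub_mul, Matrix.mul_smul,
      Matrix.smul_mul, Matrix.mul_one, Matrix.mul_assoc, hpq, hpAq, sub_self]
  have hpBq' : pᴴ * (B * q) = 0 := by rw [← Matrix.mul_assoc, hpBq]
  have key : ∀ s : Matrix (Fin n) (Fin 1) ℂ,
      (pᴴ * s = 0 ∧ (1 - q * pᴴ) * B * (1 - q * pᴴ) * s = -rq) ↔
      (β ≠ 0 ∧ s = β⁻¹ • (B⁻¹ * q) - q) := by
    intro s
    constructor
    · rintro ⟨hs1, hs2⟩
      have h3 : (1 - q * pᴴ) * s = s := by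
        rw [Matrix.sub_mul, Matrix.one_mul, Matrix.mul_assoc, hs1,
          Matrix.mul_zero, sub_zero]
      have h4 : B * s - q * (pᴴ * (B * s)) = -(B * q) := by
        rw [Matrix.mul_assoc ((1 - q * pᴴ) * B), h3, Matrix.mul_assoc,
          Matrix.sub_mul, Matrix.one_mul, Matrix.mul_assoc, hrq] at hs2
        exact hs2
      set α : ℂ := (pᴴ * (B * s)) 0 0 with hα
      have h5 : q * (pᴴ * (B * s)) = α • q := by
        rw [oneone' (pᴴ * (B * s)), ← hα, Matrix.mul_smul, Matrix.mul_one]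
      have hBs : B * s = α • q - B * q := by
        rw [h5] at h4
        linear_combination (norm := abel) h4
      have h6 : s = α • (B⁻¹ * q) - q := by
        have := congrArg (fun M => B⁻¹ * M) hBs
        simp only [← Matrix.mul_assoc, hB2, Matrix.one_mul, Matrix.mul_sub,
          Matrix.mul_smul] at this
        exact this
      have h7 : pᴴ * s = (α * β) • 1 - 1 := by
        rw [h6, Matrix.mul_sub, Matrix.mul_smul, ← Matrix.mul_assoc, hpBinvq,
          hpq, smul_smul]
      rw [hs1] at h7
      have hαβ : α * β = 1 := by
        have h := congrFun (congrFun h7.symm 0) 0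
        simpa [sub_eq_zero] using h
      have hβne : β ≠ 0 := by
        intro h; rw [h, mul_zero] at hαβ; exact zero_ne_one hαβ
      have hαval : α = β⁻¹ := eq_inv_of_mul_eq_one_left
        (by linear_combination hαβ)
      exact ⟨hβne, by rw [h6, hαval]⟩
    · rintro ⟨hβne, rfl⟩
      have hps : pᴴ * (β⁻¹ • (B⁻¹ * q) - q) = 0 := by
        rw [Matrix.mul_sub, Matrix.mul_smul, ← Matrix.mul_assoc, hpBinvq, hpq,
          smul_smul, inv_mul_cancel₀ hβne, one_smul, sub_self]
      refine ⟨hps, ?_⟩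
      have h3 : (1 - q * pᴴ) * (β⁻¹ • (B⁻¹ * q) - q) = β⁻¹ • (B⁻¹ * q) - q := by
        rw [Matrix.sub_mul, Matrix.one_mul, Matrix.mul_assoc, hps,
          Matrix.mul_zero, sub_zero]
      rw [Matrix.mul_assoc ((1 - q * pᴴ) * B), h3, Matrix.mul_assoc]
      have hBs : B * (β⁻¹ • (B⁻¹ * q) - q) = β⁻¹ • q - B * q := by
        rw [Matrix.mul_sub, Matrix.mul_smul, ← Matrix.mul_assoc, hB1,
          Matrix.one_mul]
      rw [hBs]
      simp only [Matrix.sub_mul, Matrix.one_mul, Matrix.mul_sub,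
        Matrix.mul_smul, Matrix.mul_assoc, hpq, hpBq', Matrix.mul_one,
        Matrix.mul_zero, hrq]
      abel_nf
      simp
  constructor
  · constructor
    · rintro ⟨s, hs, -⟩
      exact ((key s).mp hs).1
    · intro hβne
      refine ⟨β⁻¹ • (B⁻¹ * q) - q, (key _).mpr ⟨hβne, rfl⟩, ?_⟩
      intro y hy
      exact ((key y).mp hy).2
  · constructor
    · intro h
      by_contra hβne
      exact h ⟨_, (key _).mpr ⟨hβne, rfl⟩⟩
    · rintro hβ0 ⟨s, hs⟩
      exact ((key s).mp hs).1 hβ0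
end

section
/- Suppose α₀ := u^H (A - λ̃ I)^{-1} u ≠ 0. Then the vector v = -u + (1/α₀) (A - λ̃ I)^{-1} u satisfies u^H v = 0 and (I - u u^H)(A - λ̃ I)(I - u u^H) v = -r, i.e., it is the unique solution of the Jacobi–Davidson correction equation. -/
open Matrix

lemma one_by_one (M : Matrix (Fin 1) (Fin 1) ℂ) : M = M 0 0 • 1 := by
  ext i j
  fin_cases i; fin_cases j; simp

/-- If `α₀ = uᴴ (A - λ̃ I)⁻¹ u ≠ 0`, then
`v = -u + (1/α₀) (A - λ̃ I)⁻¹ u` satisfies `uᴴ v = 0` and the Jacobi–Davidson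
correction equation, and it is the unique such solution. -/
theorem jd_explicit_unique_solution
    {n : ℕ} (A : Matrix (Fin n) (Fin n) ℂ) (lam : ℂ)
    (hA : IsUnit (A - lam • (1 : Matrix (Fin n) (Fin n) ℂ)))
    (u : Matrix (Fin n) (Fin 1) ℂ)
    (hu : uᴴ * u = 1)
    (hlam : (uᴴ * A * u) 0 0 = lam)
    (r : Matrix (Fin n) (Fin 1) ℂ)
    (hr : r = (A - lam • 1) * u)
    (α₀ : ℂ) (hα₀ : α₀ = (uᴴ * (A - lam • (1 : Matrix (Fin n) (Fin n) ℂ))⁻¹ * u) 0 0)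
    (hα : α₀ ≠ 0)
    (v : Matrix (Fin n) (Fin 1) ℂ)
    (hv : v = -u + α₀⁻¹ • ((A - lam • (1 : Matrix (Fin n) (Fin n) ℂ))⁻¹ * u)) :
    uᴴ * v = 0 ∧
      (1 - u * uᴴ) * (A - lam • 1) * (1 - u * uᴴ) * v = -r ∧
      ∀ w : Matrix (Fin n) (Fin 1) ℂ,
        uᴴ * w = 0 →
          (1 - u * uᴴ) * (A - lam • 1) * (1 - u * uᴴ) * w = -r → w = v := by
  set B := A - lam • (1 : Matrix (Fin n) (Fin n) ℂ) with hB
  have hdet : IsUnit B.det := (Matrix.isUnit_iff_isUnit_det B).mp hA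
  have hBi : B⁻¹ * B = 1 := Matrix.nonsing_inv_mul B hdet
  have hBi' : B * B⁻¹ = 1 := Matrix.mul_nonsing_inv B hdet
  have hαm : uᴴ * B⁻¹ * u = α₀ • 1 := by
    rw [one_by_one (uᴴ * B⁻¹ * u), ← hα₀]
  have huv : uᴴ * v = 0 := by
    rw [hv, Matrix.mul_add, Matrix.mul_neg, hu, Matrix.mul_smul, ← Matrix.mul_assoc,
      hαm, smul_smul, inv_mul_cancel₀ hα, one_smul, neg_add_cancel]
  have hPu : (1 - u * uᴴ) * u = 0 := by
    rw [Matrix.sub_mul, Matrix.one_mul, Matrix.mul_assoc, hu, Matrix.mul_one, sub_self]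
  have hur : uᴴ * r = 0 := by
    rw [hr, ← Matrix.mul_assoc, Matrix.mul_sub, Matrix.sub_mul, Matrix.mul_smul,
      Matrix.mul_one, one_by_one (uᴴ * A * u), hlam, Matrix.smul_mul, hu, sub_self]
  have hPr : (1 - u * uᴴ) * r = r := by
    rw [Matrix.sub_mul, Matrix.one_mul, Matrix.mul_assoc, hur, Matrix.mul_zero, sub_zero]
  have hPv : (1 - u * uᴴ) * v = v := by
    rw [Matrix.sub_mul, Matrix.one_mul, Matrix.mul_assoc, huv, Matrix.mul_zero, sub_zero]
  have hBv : B * v = -r + α₀⁻¹ • u := by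
    rw [hv, Matrix.mul_add, Matrix.mul_neg, ← hr, Matrix.mul_smul, ← Matrix.mul_assoc,
      hBi', Matrix.one_mul]
  refine ⟨huv, ?_, ?_⟩
  · rw [Matrix.mul_assoc, hPv, Matrix.mul_assoc, hBv, Matrix.mul_add, Matrix.mul_neg, hPr,
      Matrix.mul_smul, hPu, smul_zero, add_zero]
  · intro w hw hweq
    have hPw : (1 - u * uᴴ) * w = w := by
      rw [Matrix.sub_mul, Matrix.one_mul, Matrix.mul_assoc, hw, Matrix.mul_zero, sub_zero]
    rw [Matrix.mul_assoc, hPw, Matrix.mul_assoc] at hweq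
    set c : ℂ := (uᴴ * (B * w)) 0 0 with hc
    have hexp : B * w - c • u = -r := by
      rw [← hweq]
      conv_rhs => rw [Matrix.sub_mul, Matrix.one_mul, Matrix.mul_assoc u,
        one_by_one (uᴴ * (B * w)), ← hc, Matrix.mul_smul, Matrix.mul_one]
    have hBw : B * w = -r + c • u := by rw [← hexp]; abel
    have hw' : w = -u + c • (B⁻¹ * u) := by
      have := congrArg (fun M => B⁻¹ * M) hBw
      simp only [Matrix.mul_add, Matrix.mul_neg, Matrix.mul_smul] at this
      rw [← Matrix.mul_assoc, hBi, Matrix.one_mul] at this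
      rw [this, hr, ← Matrix.mul_assoc, hBi, Matrix.one_mul]
    have hcα : c * α₀ = 1 := by
      have h2 : uᴴ * w = -(1 : Matrix (Fin 1) (Fin 1) ℂ) + (c * α₀) • 1 := by
        rw [hw', Matrix.mul_add, Matrix.mul_neg, hu, Matrix.mul_smul,
          ← Matrix.mul_assoc, hαm, smul_smul]
      rw [hw] at h2
      have h3 := congrFun (congrFun h2 0) 0
      simp at h3
      linear_combination -h3
    have : c = α₀⁻¹ := by field_simp; linear_combination hcα
    rw [hw', this, hv]
end

section
/- Suppose q^H (A - θ I)^{-1} q ≠ 0 and let s be the unique solution of the alternating two-sided Jacobi–Davidson right correction equation (I - (q p^H)/(p^H q))(A - θ I)(I - q q^H) s = -r_q with constraint q^H s = 0. Then s does not lie in the column space of Q if and only if (A - θ I)^{-1} q ≠ Q Q^H (A - θ I)^{-1} q, where Q Q^H is the orthogonal projector onto the column space of Q. -/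
open Matrix

lemma mul_one_by_one_aux {n : ℕ} (v : Matrix (Fin n) (Fin 1) ℂ)
    (M : Matrix (Fin 1) (Fin 1) ℂ) : v * M = M 0 0 • v := by
  ext i j
  fin_cases j
  simp [Matrix.mul_apply, Fin.sum_univ_one]
  ring

/-- If `qᴴ (A - θ I)⁻¹ q ≠ 0` and `s` is the unique solution of the alternating
two-sided Jacobi–Davidson right correction equation, then `s` is not in the
column space of `Q` iff `(A - θ I)⁻¹ q ≠ Q Qᴴ (A - θ I)⁻¹ q`. -/
theorem alternating_two_sided_jd_right_expansion_iff
    {n k : ℕ} (A : Matrix (Fin n) (Fin n) ℂ)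
    (Q : Matrix (Fin n) (Fin k) ℂ) (hQ : Qᴴ * Q = 1)
    (q : Matrix (Fin n) (Fin 1) ℂ) (hqnorm : qᴴ * q = 1)
    (hqQ : ∃ c : Matrix (Fin k) (Fin 1) ℂ, q = Q * c)
    (p : Matrix (Fin n) (Fin 1) ℂ)
    (hpq : (pᴴ * q) 0 0 ≠ 0)
    (θ : ℂ) (hθ : θ = (pᴴ * A * q) 0 0 / (pᴴ * q) 0 0)
    (hA : IsUnit (A - θ • (1 : Matrix (Fin n) (Fin n) ℂ)))
    (rq : Matrix (Fin n) (Fin 1) ℂ)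
    (hrq : rq = (A - θ • 1) * q)
    (hα : (qᴴ * (A - θ • (1 : Matrix (Fin n) (Fin n) ℂ))⁻¹ * q) 0 0 ≠ 0)
    (s : Matrix (Fin n) (Fin 1) ℂ)
    (hs₁ : qᴴ * s = 0)
    (hs₂ : (1 - ((pᴴ * q) 0 0)⁻¹ • (q * pᴴ)) * (A - θ • 1) * (1 - q * qᴴ) * s = -rq) :
    (¬ ∃ c : Matrix (Fin k) (Fin 1) ℂ, s = Q * c) ↔
      (A - θ • (1 : Matrix (Fin n) (Fin n) ℂ))⁻¹ * q ≠
        Q * Qᴴ * ((A - θ • (1 : Matrix (Fin n) (Fin n) ℂ))⁻¹ * q) := by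
  set B := A - θ • (1 : Matrix (Fin n) (Fin n) ℂ) with hBdef
  have hBinv : B⁻¹ * B = 1 := Matrix.nonsing_inv_mul B ((Matrix.isUnit_iff_isUnit_det B).mp hA)
  set c : ℂ := (pᴴ * q) 0 0 with hcdef
  set γ : ℂ := c⁻¹ * ((pᴴ * (B * s)) 0 0) with hγdef
  -- (1 - q qᴴ) s = s
  have h1 : (1 - q * qᴴ) * s = s := by
    rw [Matrix.sub_mul, Matrix.one_mul, Matrix.mul_assoc, hs₁, Matrix.mul_zero, sub_zero]
  -- key equation
  have key : B * (s + q) = γ • q := by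
    have h2 : (1 - c⁻¹ • (q * pᴴ)) * B * s = -(B * q) := by
      rw [← h1, ← Matrix.mul_assoc, hs₂, hrq]
    have h3 : (1 - c⁻¹ • (q * pᴴ)) * B * s
        = B * s - γ • q := by
      rw [Matrix.sub_mul, Matrix.one_mul, Matrix.smul_mul, Matrix.sub_mul,
        Matrix.smul_mul, Matrix.mul_assoc, Matrix.mul_assoc,
        mul_one_by_one_aux q (pᴴ * (B * s)), hγdef, smul_smul]
    rw [h3] at h2
    have h5 := sub_eq_iff_eq_add.mp h2
    rw [Matrix.mul_add, h5]
    abel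
  have key2 : s + q = γ • (B⁻¹ * q) := by
    have := congrArg (fun M => B⁻¹ * M) key
    simpa [← Matrix.mul_assoc, hBinv, Matrix.mul_smul] using this
  have hγα : γ * ((qᴴ * B⁻¹ * q) 0 0) = 1 := by
    have h4 : qᴴ * (s + q) = γ • (qᴴ * (B⁻¹ * q)) := by
      rw [key2, Matrix.mul_smul]
    rw [Matrix.mul_add, hs₁, hqnorm, zero_add] at h4
    have := congrArg (fun M => M 0 0) h4
    simpa [Matrix.smul_apply, Matrix.one_apply, Matrix.mul_assoc] using this.symm
  have hγ : γ ≠ 0 := left_ne_zero_of_mul_eq_one hγα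
  have hseq : s = γ • (B⁻¹ * q) - q := by
    rw [← key2]; abel
  obtain ⟨c₀, hc₀⟩ := hqQ
  have main : (∃ c : Matrix (Fin k) (Fin 1) ℂ, s = Q * c) ↔
      B⁻¹ * q = Q * Qᴴ * (B⁻¹ * q) := by
    constructor
    · rintro ⟨d, hd⟩
      have hB : B⁻¹ * q = Q * (γ⁻¹ • (d + c₀)) := by
        have : γ • (B⁻¹ * q) = Q * (d + c₀) := by
          rw [← key2, hd, hc₀, Matrix.mul_add]
        rw [Matrix.mul_smul, ← this, smul_smul, inv_mul_cancel₀ hγ, one_smul]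
      rw [hB, Matrix.mul_assoc, ← Matrix.mul_assoc Qᴴ, hQ, Matrix.one_mul]
    · intro hB
      refine ⟨γ • (Qᴴ * (B⁻¹ * q)) - c₀, ?_⟩
      symm
      rw [Matrix.mul_sub, Matrix.mul_smul, ← Matrix.mul_assoc, ← hB, ← hc₀, ← hseq]
  rw [not_iff_not.mpr main]
end
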